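/- For odd j ≥ 5, the Fibonacci numbers (with φ_0 = 0, φ_1 = 1) satisfy gcd(φ_{j-2}, φ_{j+2}) = 1 and (φ_{j-2} - 1)(φ_{j+2} - 1) = (φ_j - 1)(φ_j - 2), where the corresponding rational cuspidal curve has degree φ_j; i.e., the genus formula (d-1)(d-2)/2 = (p-1)(q-1)/2 holds with d = φ_j, p = φ_{j-2}, q = φ_{j+2}. -/
import Mathlib

lemma fib_cassini (n : ℕ) :
    (Nat.fib (n + 1) : ℤ) ^ 2 - Nat.fib (n + 2) * Nat.fib n = (-1) ^ n := by
  induction n with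
  | zero => simp
  | succ n ih =>
    have h : (Nat.fib (n + 3) : ℤ) = Nat.fib (n + 1) + Nat.fib (n + 2) := by
      exact_mod_cast congrArg (Nat.cast (R := ℤ)) (Nat.fib_add_two (n := n + 1))
    have h2 : (Nat.fib (n + 2) : ℤ) = Nat.fib n + Nat.fib (n + 1) := by
      exact_mod_cast congrArg (Nat.cast (R := ℤ)) (Nat.fib_add_two (n := n))
    rw [show n + 1 + 1 = n + 2 from rfl, show n + 1 + 2 = n + 3 from rfl, h, h2,
      pow_succ]
    rw [h2] at ih
    linear_combination -ih

lemma fib_catalan2 (n : ℕ) :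
    (Nat.fib (n + 4) : ℤ) * Nat.fib n = (Nat.fib (n + 2) : ℤ) ^ 2 - (-1) ^ n := by
  have h2 : (Nat.fib (n + 2) : ℤ) = Nat.fib n + Nat.fib (n + 1) := by
    exact_mod_cast congrArg (Nat.cast (R := ℤ)) (Nat.fib_add_two (n := n))
  have h3 : (Nat.fib (n + 3) : ℤ) = Nat.fib (n + 1) + Nat.fib (n + 2) := by
    exact_mod_cast congrArg (Nat.cast (R := ℤ)) (Nat.fib_add_two (n := n + 1))
  have h4 : (Nat.fib (n + 4) : ℤ) = Nat.fib (n + 2) + Nat.fib (n + 3) := by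
    exact_mod_cast congrArg (Nat.cast (R := ℤ)) (Nat.fib_add_two (n := n + 2))
  have hc := fib_cassini n
  rw [h4, h3, h2] at *
  linear_combination -hc

theorem fibonacci_genus_identity (j : ℕ) (hodd : Odd j) (hj : 5 ≤ j) :
    Nat.Coprime (Nat.fib (j - 2)) (Nat.fib (j + 2)) ∧
      (Nat.fib (j - 2) - 1) * (Nat.fib (j + 2) - 1)
        = (Nat.fib j - 1) * (Nat.fib j - 2) := by
  obtain ⟨k, hk⟩ := hodd
  have hk2 : 2 ≤ k := by omega
  obtain ⟨m, rfl⟩ : ∃ m, k = m + 2 := ⟨k - 2, by omega⟩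
  subst hk
  have e1 : 2 * (m + 2) + 1 - 2 = 2 * m + 3 := by omega
  have e2 : 2 * (m + 2) + 1 + 2 = 2 * m + 7 := by omega
  have e3 : 2 * (m + 2) + 1 = 2 * m + 5 := by omega
  rw [e1, e2, e3]
  constructor
  · rw [Nat.Coprime, ← Nat.fib_gcd]
    have : Nat.gcd (2 * m + 3) (2 * m + 7) = 1 := by
      have h : Nat.gcd (2 * m + 3) (4 + (2 * m + 3)) = Nat.gcd (2 * m + 3) 4 :=
        Nat.gcd_add_self_right _ _
      rw [show 2 * m + 7 = 4 + (2 * m + 3) by omega, h]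
      have : Nat.Coprime (2 * m + 3) 2 :=
        Odd.coprime_two_right ⟨m + 1, by omega⟩
      have := Nat.Coprime.pow_right 2 this
      simpa using this
    rw [this, Nat.fib_one]
  · have hcat := fib_catalan2 (2 * m + 3)
    have hsum : (Nat.fib (2 * m + 7) : ℤ) + Nat.fib (2 * m + 3)
        = 3 * Nat.fib (2 * m + 5) := by
      have h2 : (Nat.fib (2 * m + 5) : ℤ) = Nat.fib (2 * m + 3) + Nat.fib (2 * m + 4) := by
        exact_mod_cast congrArg (Nat.cast (R := ℤ)) (Nat.fib_add_two (n := 2 * m + 3))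
      have h3 : (Nat.fib (2 * m + 6) : ℤ) = Nat.fib (2 * m + 4) + Nat.fib (2 * m + 5) := by
        exact_mod_cast congrArg (Nat.cast (R := ℤ)) (Nat.fib_add_two (n := 2 * m + 4))
      have h4 : (Nat.fib (2 * m + 7) : ℤ) = Nat.fib (2 * m + 5) + Nat.fib (2 * m + 6) := by
        exact_mod_cast congrArg (Nat.cast (R := ℤ)) (Nat.fib_add_two (n := 2 * m + 5))
      rw [h4, h3, h2]; ring
    rw [show 2 * m + 3 + 4 = 2 * m + 7 by omega, show 2 * m + 3 + 2 = 2 * m + 5 by omega] at hcat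
    have hpow : ((-1 : ℤ)) ^ (2 * m + 3) = -1 := by
      rw [Odd.neg_one_pow ⟨m + 1, by omega⟩]
    rw [hpow] at hcat
    have hf3 : 1 ≤ Nat.fib (2 * m + 3) := Nat.fib_pos.mpr (by omega)
    have hf7 : 1 ≤ Nat.fib (2 * m + 7) := Nat.fib_pos.mpr (by omega)
    have hf5 : 5 ≤ Nat.fib (2 * m + 5) := by
      calc 5 = Nat.fib 5 := rfl
        _ ≤ Nat.fib (2 * m + 5) := Nat.fib_mono (by omega)
    have hg1 : 1 ≤ Nat.fib (2 * m + 5) := by omega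
    have hg2 : 2 ≤ Nat.fib (2 * m + 5) := by omega
    zify [hf3, hf7, hg1, hg2]
    linear_combination hcat - hsum
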